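/- Let N ≥ 1, let β > 0 and let E : Fin N → ℝ satisfy Σ_k exp(−β E_k) = 1. Set λ_k = exp(−β E_k) and let S̃ be the modified Rényi entropy of λ. Then the derivative of S̃ at n = 1 equals minus β² times the variance of the energy: S̃'(1) = −β²·[ Σ_k exp(−β E_k) E_k² − (Σ_k exp(−β E_k) E_k)² ]. -/

import Mathlib

open scoped BigOperators

/-- The modified Rényi entropy `S̃(n) = log(Σ_k λ_k^n) − n·(Σ_k λ_k^n log λ_k)/(Σ_k λ_k^n)`
of a strictly positive vector `λ`, as a function of a real variable `n`. -/
noncomputable def modifiedRenyi {N : ℕ} (lam : Fin N → ℝ) (n : ℝ) : ℝ :=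
  Real.log (∑ k, lam k ^ n) -
    n * (∑ k, lam k ^ n * Real.log (lam k)) / (∑ k, lam k ^ n)

/-- Let `N ≥ 1`, `β > 0` and `E : Fin N → ℝ` with `Σ_k exp(−β E_k) = 1`.
Setting `λ_k = exp(−β E_k)`, the derivative of the modified Rényi entropy of `λ` at `n = 1`
equals minus `β²` times the variance of the energy:
`S̃'(1) = −β²·[ Σ_k exp(−β E_k) E_k² − (Σ_k exp(−β E_k) E_k)² ]`. -/
theorem deriv_modifiedRenyi_boltzmann_at_one {N : ℕ} (hN : 1 ≤ N) (β : ℝ) (hβ : 0 < β)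
    (E : Fin N → ℝ) (hnorm : ∑ k, Real.exp (-β * E k) = 1) :
    deriv (modifiedRenyi (fun k => Real.exp (-β * E k))) 1 =
      -β ^ 2 * ((∑ k, Real.exp (-β * E k) * E k ^ 2) -
        (∑ k, Real.exp (-β * E k) * E k) ^ 2) := by
  set c : Fin N → ℝ := fun k => -β * E k with hc
  set F : ℝ → ℝ := fun n => ∑ k, Real.exp (c k * n) with hF
  set G : ℝ → ℝ := fun n => ∑ k, Real.exp (c k * n) * c k with hGdef
  have hfun : modifiedRenyi (fun k => Real.exp (-β * E k)) =
      fun n => Real.log (F n) - n * G n / F n := by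
    funext n
    simp only [modifiedRenyi, hF, hGdef, ← Real.exp_mul, Real.log_exp, hc]
  have hF1 : F 1 = 1 := by
    simp only [hF, mul_one]; exact hnorm
  have hFx : HasDerivAt F (G 1) 1 := by
    have : HasDerivAt F (∑ k, c k * Real.exp (c k * 1)) 1 := by
      apply HasDerivAt.fun_sum
      intro k _
      simpa [mul_comm] using ((hasDerivAt_id (1:ℝ)).const_mul (c k)).exp
    simpa [hGdef, mul_comm] using this
  set H : ℝ := ∑ k, Real.exp (c k * 1) * c k * c k with hHdef
  have hGx : HasDerivAt G H 1 := by
    have : HasDerivAt G (∑ k, c k * Real.exp (c k * 1) * c k) 1 := by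
      apply HasDerivAt.fun_sum
      intro k _
      simpa [mul_comm] using (((hasDerivAt_id (1:ℝ)).const_mul (c k)).exp).mul_const (c k)
    simpa [hHdef, mul_comm] using this
  have hFne : F 1 ≠ 0 := by rw [hF1]; norm_num
  have hmain : HasDerivAt (fun n => Real.log (F n) - n * G n / F n)
      (G 1 / F 1 - ((1 * G 1 + 1 * H) * F 1 - 1 * G 1 * G 1) / F 1 ^ 2) 1 := by
    simpa using (hFx.log hFne).fun_sub (((hasDerivAt_id (1:ℝ)).fun_mul hGx).fun_div hFx hFne)
  rw [hfun, hmain.deriv, hF1]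
  have hG1 : G 1 = -β * ∑ k, Real.exp (-β * E k) * E k := by
    simp only [hGdef, hc, mul_one, Finset.mul_sum]
    apply Finset.sum_congr rfl; intro k _; ring
  have hH : H = β ^ 2 * ∑ k, Real.exp (-β * E k) * E k ^ 2 := by
    simp only [hHdef, hc, mul_one, Finset.mul_sum]
    apply Finset.sum_congr rfl; intro k _; ring
  rw [hG1, hH]
  ring
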